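/- Every graph with n vertices and average degree d > 16 contains a cycle of length at most 2·⌈log_{d/16} n⌉. -/

import Mathlib

open SimpleGraph Walk Finset


lemma twoPaths {V : Type*} [DecidableEq V] {H : SimpleGraph V} {a b : V}
    (p : H.Walk a b) : ∀ q : H.Walk a b, p.IsPath → q.IsPath → p ≠ q →
      ∃ (u : V) (c : H.Walk u u), c.IsCycle ∧ c.length ≤ p.length + q.length := by
  induction p with
  | nil =>
    intro q _ hq hne
    exact absurd (Walk.isPath_iff_eq_nil.mp hq).symm hne
  | @cons a x b hax p' ih =>
    intro q hp hq hne
    cases q with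
    | nil => exact absurd (Walk.isPath_iff_eq_nil.mp hp) (by simp)
    | @cons _ y _ hay q' =>
      by_cases hxy : x = y
      · subst hxy
        have hne' : p' ≠ q' := fun h => hne (by rw [h])
        obtain ⟨u, c, hc, hlen⟩ := ih q' hp.of_cons hq.of_cons hne'
        exact ⟨u, c, hc, by simp only [Walk.length_cons]; omega⟩
      · -- construct cycle through edge a-x
        have haxs : a ∉ p'.support := (Walk.cons_isPath_iff _ _).mp hp |>.2
        have hays : a ∉ q'.support := (Walk.cons_isPath_iff _ _).mp hq |>.2
        set R₀ : H.Walk x a := p'.append (Walk.cons hay q').reverse with hR₀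
        have hR₀len : R₀.length = p'.length + q'.length + 1 := by
          simp only [hR₀, Walk.length_append, Walk.length_reverse, Walk.length_cons]
          omega
        have hedge : s(a, x) ∉ R₀.edges := by
          intro hmem
          simp only [hR₀, Walk.edges_append, Walk.edges_reverse, Walk.edges_cons,
            List.mem_append, List.mem_reverse, List.mem_cons] at hmem
          rcases hmem with h | h | h
          · exact haxs (Walk.fst_mem_support_of_mem_edges _ h)
          · rw [Sym2.eq_iff] at h
            rcases h with ⟨-, h⟩ | ⟨-, h⟩
            · exact hxy h
            · exact hax.ne h.symm
          · exact hays (Walk.fst_mem_support_of_mem_edges _ h)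
        set R : H.Path x a := R₀.toPath with hRdef
        have hRe : s(a, x) ∉ (R : H.Walk x a).edges := fun h => hedge (Walk.edges_bypass_subset _ h)
        have hcyc : (Walk.cons hax (R : H.Walk x a)).IsCycle :=
          SimpleGraph.Path.cons_isCycle R hax hRe
        refine ⟨a, _, hcyc, ?_⟩
        have hRb : (R : H.Walk x a).length ≤ R₀.length := Walk.length_bypass_le R₀
        simp only [Walk.length_cons]
        omega

lemma growth {W : Type*} [Fintype W] [DecidableEq W] {H : SimpleGraph W} [DecidableRel H.Adj]
    {x : ℝ} (hx : 1 ≤ x) (hδ : ∀ v : W, x + 1 ≤ (H.degree v : ℝ))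
    {k : ℕ} (hk : 1 ≤ k)
    (hcyc : ∀ (u : W) (c : H.Walk u u), c.IsCycle → 2 * k < c.length)
    (v₀ : W) : x ^ k + 1 ≤ (Fintype.card W : ℝ) := by
  classical
  have hx0 : (0:ℝ) ≤ x := by linarith
  -- two short paths to neighbors of a vertex give a short cycle
  have subA : ∀ (u w1 w2 : W), H.Adj u w1 → H.Adj u w2 → w1 ≠ w2 →
      ∀ (p1 : H.Walk v₀ w1) (p2 : H.Walk v₀ w2), p1.IsPath → p2.IsPath →
      u ∉ p1.support → u ∉ p2.support → p1.length + p2.length + 2 ≤ 2 * k → False := by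
    intro u w1 w2 h1 h2 hw p1 p2 hp1 hp2 hu1 hu2 hlen
    have hR1p : (Walk.cons h1 p1.reverse).IsPath := by
      rw [Walk.cons_isPath_iff]
      exact ⟨hp1.reverse, by simpa [Walk.support_reverse] using hu1⟩
    have hR2p : (Walk.cons h2 p2.reverse).IsPath := by
      rw [Walk.cons_isPath_iff]
      exact ⟨hp2.reverse, by simpa [Walk.support_reverse] using hu2⟩
    have hne : Walk.cons h1 p1.reverse ≠ Walk.cons h2 p2.reverse := by
      intro h
      have := congrArg (fun r => r.getVert 1) h
      simp only [Walk.getVert_cons_succ, Walk.getVert_zero] at this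
      exact hw this
    obtain ⟨u', c, hc, hlen'⟩ := twoPaths _ _ hR1p hR2p hne
    have := hcyc u' c hc
    simp only [Walk.length_cons, Walk.length_reverse] at hlen'
    omega
  -- vertices on walks from v₀ have small edist
  have mem_short : ∀ {w : W} (p : H.Walk v₀ w) (y : W), y ∈ p.support →
      H.edist v₀ y ≤ (p.length : ℕ∞) := by
    intro w p y hy
    exact le_trans (SimpleGraph.edist_le (p.takeUntil y hy))
      (Nat.cast_le.mpr (Walk.length_takeUntil_le p hy))
  -- extract short paths
  have getpath : ∀ (wv : W) (i : ℕ), H.edist v₀ wv ≤ (i:ℕ∞) →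
      ∃ p : H.Walk v₀ wv, p.IsPath ∧ p.length ≤ i := by
    intro wv i hle
    have hnt : H.edist v₀ wv ≠ ⊤ := ne_top_of_le_ne_top (ENat.coe_ne_top i) hle
    obtain ⟨p, hp⟩ := SimpleGraph.exists_walk_of_edist_ne_top hnt
    refine ⟨p.bypass, p.bypass_isPath, le_trans (Walk.length_bypass_le p) ?_⟩
    have : (p.length : ℕ∞) ≤ (i : ℕ∞) := by rw [hp]; exact hle
    exact_mod_cast this
  set L : ℕ → Finset W := fun i => univ.filter (fun u => H.edist v₀ u = (i:ℕ∞)) with hLdef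
  have memL : ∀ {i : ℕ} {u : W}, u ∈ L i ↔ H.edist v₀ u = (i:ℕ∞) := by
    intro i u; simp [hLdef]
  have hL0 : L 0 = {v₀} := by
    ext u
    rw [memL, Finset.mem_singleton]
    rw [Nat.cast_zero, SimpleGraph.edist_eq_zero_iff]
    exact ⟨Eq.symm, Eq.symm⟩
  have hdisj : ∀ i j : ℕ, i ≠ j → Disjoint (L i) (L j) := by
    intro i j hij
    rw [Finset.disjoint_left]
    intro u hi hj
    rw [memL] at hi hj
    exact hij (by exact_mod_cast hi.symm.trans hj)
  -- the key growth step
  have step : ∀ i : ℕ, i + 1 ≤ k → x * ((L i).card : ℝ) ≤ ((L (i+1)).card : ℝ) := by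
    intro i hik
    set A : W → Finset W := fun u => H.neighborFinset u ∩ L (i+1) with hAdef
    have hAcard : ∀ u ∈ L i, x ≤ ((A u).card : ℝ) := by
      intro u hu
      rw [memL] at hu
      set B : Finset W := (H.neighborFinset u).filter (fun w => H.edist v₀ w ≤ (i:ℕ∞)) with hBdef
      have hBone : B.card ≤ 1 := by
        rw [Finset.card_le_one]
        intro w1 hw1 w2 hw2
        by_contra hne
        rw [hBdef, Finset.mem_filter, SimpleGraph.mem_neighborFinset] at hw1 hw2
        obtain ⟨p1, hp1, hl1⟩ := getpath w1 i hw1.2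
        obtain ⟨p2, hp2, hl2⟩ := getpath w2 i hw2.2
        have husup : ∀ (wz : W) (p : H.Walk v₀ wz), p.IsPath → p.length ≤ i → H.Adj u wz →
            u ∉ p.support := by
          intro wz p _ hpl hadj hmem
          have hts := p.take_spec hmem
          have hlen := congrArg Walk.length hts
          rw [Walk.length_append] at hlen
          have htake : i ≤ (p.takeUntil u hmem).length := by
            have h2 := SimpleGraph.edist_le (p.takeUntil u hmem)
            rw [hu] at h2
            exact_mod_cast h2
          have hdrop : (p.dropUntil u hmem).length = 0 := by omega
          exact hadj.ne (Walk.eq_of_length_eq_zero hdrop)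
        exact subA u w1 w2 hw1.1 hw2.1 hne p1 p2 hp1 hp2
          (husup w1 p1 hp1 hl1 hw1.1) (husup w2 p2 hp2 hl2 hw2.1) (by omega)
      have hsubset : H.neighborFinset u ⊆ A u ∪ B := by
        intro w hw
        rw [SimpleGraph.mem_neighborFinset] at hw
        have hr : H.edist v₀ w ≤ ((i+1 : ℕ) : ℕ∞) := by
          have h2 : H.edist u w = 1 := SimpleGraph.edist_eq_one_iff_adj.mpr hw
          have h3 := SimpleGraph.edist_triangle (G := H) (u := v₀) (v := u) (w := w)
          rw [hu, h2] at h3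
          exact h3.trans_eq (by push_cast; ring)
        have hnt : H.edist v₀ w ≠ ⊤ := ne_top_of_le_ne_top (ENat.coe_ne_top _) hr
        lift H.edist v₀ w to ℕ using hnt with m hm
        have hmle : m ≤ i + 1 := by exact_mod_cast hr
        rw [Finset.mem_union]
        rcases eq_or_lt_of_le hmle with heq | hlt
        · left
          show w ∈ H.neighborFinset u ∩ L (i + 1)
          refine Finset.mem_inter.mpr ⟨by rw [SimpleGraph.mem_neighborFinset]; exact hw, memL.mpr ?_⟩
          rw [← hm]
          exact_mod_cast heq
        · right
          show w ∈ (H.neighborFinset u).filter (fun w => H.edist v₀ w ≤ (i:ℕ∞))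
          rw [Finset.mem_filter]
          refine ⟨by rw [SimpleGraph.mem_neighborFinset]; exact hw, ?_⟩
          rw [← hm]
          exact_mod_cast Nat.lt_succ_iff.mp hlt
      have hcards : H.degree u ≤ (A u).card + 1 := by
        calc H.degree u = (H.neighborFinset u).card := rfl
        _ ≤ (A u ∪ B).card := Finset.card_le_card hsubset
        _ ≤ (A u).card + B.card := Finset.card_union_le _ _
        _ ≤ (A u).card + 1 := by omega
      have := hδ u
      have hc : ((H.degree u : ℕ) : ℝ) ≤ ((A u).card : ℝ) + 1 := by exact_mod_cast hcards
      linarith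
    have hdisjA : ∀ u1 ∈ L i, ∀ u2 ∈ L i, u1 ≠ u2 → Disjoint (A u1) (A u2) := by
      intro u1 hu1 u2 hu2 hne
      rw [Finset.disjoint_left]
      intro w hwa1 hwa2
      rw [hAdef, Finset.mem_inter, SimpleGraph.mem_neighborFinset] at hwa1 hwa2
      rw [memL] at hu1 hu2
      obtain ⟨p1, hp1, hl1⟩ := getpath u1 i (le_of_eq hu1)
      obtain ⟨p2, hp2, hl2⟩ := getpath u2 i (le_of_eq hu2)
      have hwl : H.edist v₀ w = ((i+1 : ℕ) : ℕ∞) := memL.mp hwa1.2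
      have hwsup : ∀ (uz : W) (p : H.Walk v₀ uz), p.length ≤ i → w ∉ p.support := by
        intro uz p hpl hmem
        have h1 := mem_short p w hmem
        rw [hwl] at h1
        have : (i+1 : ℕ) ≤ p.length := by exact_mod_cast h1
        omega
      exact absurd (subA w u1 u2 hwa1.1.symm hwa2.1.symm hne p1 p2 hp1 hp2
        (hwsup u1 p1 hl1) (hwsup u2 p2 hl2) (by omega)) (by simp)
    have hbiU : ((L i).biUnion A).card = ∑ u ∈ L i, (A u).card :=
      Finset.card_biUnion hdisjA
    have hsub2 : (L i).biUnion A ⊆ L (i+1) := by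
      intro w hw
      rw [Finset.mem_biUnion] at hw
      obtain ⟨u, _, hw⟩ := hw
      exact (Finset.mem_inter.mp hw).2
    calc x * ((L i).card : ℝ) = ∑ _u ∈ L i, x := by rw [Finset.sum_const, nsmul_eq_mul, mul_comm]
    _ ≤ ∑ u ∈ L i, ((A u).card : ℝ) := Finset.sum_le_sum hAcard
    _ = (((L i).biUnion A).card : ℝ) := by rw [hbiU]; push_cast; rfl
    _ ≤ ((L (i+1)).card : ℝ) := by exact_mod_cast Finset.card_le_card hsub2
  have main : ∀ i : ℕ, i ≤ k → x ^ i ≤ ((L i).card : ℝ) := by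
    intro i
    induction i with
    | zero => intro _; simp [hL0]
    | succ i ih =>
      intro h
      calc x ^ (i+1) = x * x ^ i := by ring
      _ ≤ x * ((L i).card : ℝ) := by
          exact mul_le_mul_of_nonneg_left (ih (by omega)) hx0
      _ ≤ ((L (i+1)).card : ℝ) := step i h
  have hunion : (L 0).card + (L k).card ≤ Fintype.card W := by
    rw [← Finset.card_union_of_disjoint (hdisj 0 k (by omega))]
    exact le_trans (Finset.card_le_card (Finset.subset_univ _)) (le_of_eq (Finset.card_univ))
  have h1 : (L 0).card = 1 := by rw [hL0]; simp
  have hk' := main k le_rfl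
  have : ((L 0).card : ℝ) + ((L k).card : ℝ) ≤ (Fintype.card W : ℝ) := by exact_mod_cast hunion
  rw [h1] at this
  push_cast at this
  linarith

lemma exists_min_deg_subset {n : ℕ} (G : SimpleGraph (Fin n)) [DecidableRel G.Adj] {d : ℝ}
    (hd0 : 0 < d) (hn : 0 < n) (hsum : d * n ≤ ∑ v, (G.degree v : ℝ)) :
    ∃ S : Finset (Fin n), S.Nonempty ∧
      ∀ v ∈ S, d / 4 ≤ ((G.neighborFinset v ∩ S).card : ℝ) := by
  classical
  set f : Finset (Fin n) → Fin n → ℕ := fun S v => (G.neighborFinset v ∩ S).card with hf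
  set P : Finset (Fin n) → Prop :=
    fun S => S.Nonempty ∧ d / 2 * S.card ≤ ∑ v ∈ S, (f S v : ℝ) with hP
  have huniv : P univ := by
    refine ⟨⟨⟨0, hn⟩, mem_univ _⟩, ?_⟩
    have hfu : ∀ v, f univ v = G.degree v := by
      intro v
      rw [hf]
      simp only [Finset.inter_univ]
      rfl
    rw [Finset.card_univ, Fintype.card_fin]
    calc d / 2 * n ≤ d * n := by nlinarith [Nat.cast_nonneg (α := ℝ) n]
    _ ≤ ∑ v, (G.degree v : ℝ) := hsum
    _ = ∑ v ∈ univ, (f univ v : ℝ) := by simp [hfu]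
  -- take S of minimal cardinality satisfying P
  have hne : (univ.filter (fun S => P S)).Nonempty := ⟨univ, Finset.mem_filter.mpr ⟨Finset.mem_univ _, huniv⟩⟩
  obtain ⟨S, hSmem, hSmin⟩ := Finset.exists_min_image (univ.filter (fun S => P S))
    (fun S => S.card) hne
  rw [Finset.mem_filter] at hSmem
  obtain ⟨-, hSne, hSavg⟩ := hSmem
  refine ⟨S, hSne, ?_⟩
  intro v hv
  by_contra hlt
  push_neg at hlt
  set S' : Finset (Fin n) := S.erase v with hS'
  -- counting identity
  have hcount : ∀ u ∈ S', f S u = f S' u + (G.neighborFinset u ∩ {v}).card := by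
    intro u hu
    have hsplit : G.neighborFinset u ∩ S = (G.neighborFinset u ∩ S') ∪ (G.neighborFinset u ∩ {v}) := by
      ext w
      simp only [Finset.mem_inter, Finset.mem_union, Finset.mem_singleton, hS',
        Finset.mem_erase]
      constructor
      · rintro ⟨h1, h2⟩
        by_cases hwv : w = v
        · exact Or.inr ⟨h1, hwv⟩
        · exact Or.inl ⟨h1, hwv, h2⟩
      · rintro (⟨h1, _, h2⟩ | ⟨h1, h2⟩)
        · exact ⟨h1, h2⟩
        · exact ⟨h1, h2 ▸ hv⟩
    have hdisj : Disjoint (G.neighborFinset u ∩ S') (G.neighborFinset u ∩ {v}) := by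
      rw [Finset.disjoint_left]
      intro w h1 h2
      rw [Finset.mem_inter] at h1 h2
      exact (Finset.mem_erase.mp h1.2).1 (Finset.mem_singleton.mp h2.2)
    rw [hf]
    simp only
    rw [hsplit, Finset.card_union_of_disjoint hdisj]
  have hv_ind : ∀ u, (G.neighborFinset u ∩ {v}).card = if G.Adj v u then 1 else 0 := by
    intro u
    by_cases h : G.Adj u v
    · rw [if_pos h.symm]
      rw [Finset.card_eq_one]
      exact ⟨v, by ext w; simp [SimpleGraph.mem_neighborFinset]; rintro rfl; exact h⟩
    · rw [if_neg (fun h' => h h'.symm)]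
      rw [Finset.card_eq_zero]
      ext w
      simp only [Finset.mem_inter, Finset.mem_singleton, SimpleGraph.mem_neighborFinset,
        Finset.notMem_empty, iff_false]
      rintro ⟨h1, rfl⟩; exact h h1
  have hsum_ind : ∑ u ∈ S', (G.neighborFinset u ∩ {v}).card = f S v := by
    have h1 : ∑ u ∈ S', (G.neighborFinset u ∩ {v}).card
        = ∑ u ∈ S', if G.Adj v u then 1 else 0 :=
      Finset.sum_congr rfl (fun u _ => hv_ind u)
    have h2 : G.neighborFinset v ∩ S' = S'.filter (fun u => G.Adj v u) := by
      ext w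
      simp only [Finset.mem_inter, SimpleGraph.mem_neighborFinset, Finset.mem_filter]
      exact and_comm
    have h3 : f S v = f S' v := by
      rw [hf]; simp only
      congr 1
      ext w
      simp only [Finset.mem_inter, SimpleGraph.mem_neighborFinset, hS', Finset.mem_erase]
      constructor
      · rintro ⟨h1, h2⟩; exact ⟨h1, h1.ne', h2⟩
      · rintro ⟨h1, _, h2⟩; exact ⟨h1, h2⟩
    rw [h1, h3, hf]
    simp only
    rw [h2, Finset.card_filter]
  have htot : ∑ u ∈ S', f S' u + 2 * f S v = ∑ u ∈ S, f S u := by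
    have hh := Finset.sum_erase_add S (f S) hv
    have h4 : ∑ u ∈ S', f S u = ∑ u ∈ S', f S' u + f S v := by
      rw [Finset.sum_congr rfl hcount, Finset.sum_add_distrib, hsum_ind]
    rw [← hS'] at hh
    omega
  have hS'ne : S'.Nonempty := by
    rw [Finset.nonempty_iff_ne_empty]
    intro h
    have hSv : S = {v} := by
      ext w
      simp only [Finset.mem_singleton]
      constructor
      · intro hw
        by_contra hwv
        have : w ∈ S' := by rw [hS', Finset.mem_erase]; exact ⟨hwv, hw⟩
        rw [h] at this
        exact absurd this (Finset.notMem_empty _)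
      · rintro rfl; exact hv
    have hzero : f S v = 0 := by
      rw [hf]; simp only [hSv]
      rw [Finset.card_eq_zero]
      ext w
      simp only [Finset.mem_inter, Finset.mem_singleton, SimpleGraph.mem_neighborFinset,
        Finset.notMem_empty, iff_false]
      rintro ⟨h1, rfl⟩
      exact G.loopless.irrefl _ h1
    rw [hSv] at hSavg
    simp only [Finset.card_singleton, Nat.cast_one, mul_one, Finset.sum_singleton] at hSavg
    rw [hSv] at hzero  -- no-op safety
    rw [hzero] at hSavg
    norm_num at hSavg
    linarith
  have hcard : S'.card + 1 = S.card := Finset.card_erase_add_one hv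
  have hcast := congrArg (Nat.cast : ℕ → ℝ) htot
  push_cast at hcast
  have hcardR : (S.card : ℝ) = S'.card + 1 := by exact_mod_cast hcard.symm
  rw [hcardR] at hSavg
  have hP' : P S' := by
    refine ⟨hS'ne, ?_⟩
    nlinarith [hlt]
  have hmin := hSmin S' (Finset.mem_filter.mpr ⟨Finset.mem_univ _, hP'⟩)
  have hlt2 : S'.card < S.card := Finset.card_erase_lt_of_mem hv
  omega

lemma degree_induce {V : Type*} [Fintype V] [DecidableEq V] (G : SimpleGraph V)
    [DecidableRel G.Adj] (S : Finset V) (v : ↥(S : Set V)) :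
    (G.induce (S : Set V)).degree v = (G.neighborFinset (v : V) ∩ S).card := by
  show ((G.induce (S : Set V)).neighborFinset v).card = _
  apply Finset.card_bij (fun (w : ↥(S : Set V)) _ => (w : V))
  · intro w hw
    rw [SimpleGraph.mem_neighborFinset] at hw
    rw [Finset.mem_inter, SimpleGraph.mem_neighborFinset]
    exact ⟨hw, by exact_mod_cast w.2⟩
  · intro w1 _ w2 _ h
    exact Subtype.ext h
  · intro w hw
    rw [Finset.mem_inter, SimpleGraph.mem_neighborFinset] at hw
    refine ⟨⟨w, by exact_mod_cast hw.2⟩, ?_, rfl⟩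
    rw [SimpleGraph.mem_neighborFinset]
    exact hw.1

/-- Every graph on `n ≥ 1` vertices with average degree `d > 16` contains a cycle of length
at most `2⌈log_{d/16} n⌉`. -/
theorem weak_moore_bound (n : ℕ) (hn : 0 < n) (G : SimpleGraph (Fin n)) [DecidableRel G.Adj]
    (d : ℝ) (hd : d = (∑ v, (G.degree v : ℝ)) / n) (hd16 : 16 < d) :
    ∃ (u : Fin n) (c : G.Walk u u), c.IsCycle ∧
      c.length ≤ 2 * ⌈Real.logb (d / 16) n⌉₊ := by
  classical
  have hn0 : (0:ℝ) < n := by exact_mod_cast hn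
  have hsum : d * n = ∑ v, (G.degree v : ℝ) := by
    rw [hd]; field_simp
  have hd0 : 0 < d := by linarith
  -- n is large
  have hdeg_lt : ∀ v, (G.degree v : ℝ) ≤ (n:ℝ) - 1 := by
    intro v
    have := G.degree_lt_card_verts v
    rw [Fintype.card_fin] at this
    have : G.degree v + 1 ≤ n := this
    have : ((G.degree v : ℕ) : ℝ) + 1 ≤ n := by exact_mod_cast this
    linarith
  have hdn : d ≤ (n:ℝ) - 1 := by
    have h1 : ∑ v, (G.degree v : ℝ) ≤ ∑ _v : Fin n, ((n:ℝ) - 1) :=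
      Finset.sum_le_sum (fun v _ => hdeg_lt v)
    rw [Finset.sum_const, Finset.card_univ, Fintype.card_fin, nsmul_eq_mul] at h1
    rw [← hsum] at h1
    nlinarith
  have hn1 : (1:ℝ) < n := by linarith
  set b : ℝ := d / 16 with hb
  have hb1 : 1 < b := by rw [hb]; linarith
  set k : ℕ := ⌈Real.logb b n⌉₊ with hk
  have hk1 : 1 ≤ k := by
    rw [hk]
    exact Nat.one_le_iff_ne_zero.mpr (by
      simp only [ne_eq, Nat.ceil_eq_zero, not_le]
      exact Real.logb_pos hb1 hn1)
  by_contra hcon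
  push_neg at hcon
  have hcyc : ∀ (u : Fin n) (c : G.Walk u u), c.IsCycle → 2 * k < c.length := by
    intro u c hc
    exact hcon u c hc
  -- min degree subset
  obtain ⟨S, hSne, hSdeg⟩ := exists_min_deg_subset G hd0 hn (le_of_eq hsum)
  set H : SimpleGraph ↥(S : Set (Fin n)) := G.induce (S : Set (Fin n)) with hH
  obtain ⟨s, hs⟩ := hSne
  have hδ : ∀ v : ↥(S : Set (Fin n)), b + 1 ≤ (H.degree v : ℝ) := by
    intro v
    have hdeq : H.degree v = (G.neighborFinset (v : Fin n) ∩ S).card := degree_induce G S v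
    rw [hdeq]
    have := hSdeg (v : Fin n) (by exact_mod_cast v.2)
    rw [hb]
    linarith
  have hcycH : ∀ (u : ↥(S : Set (Fin n))) (c : H.Walk u u), c.IsCycle → 2 * k < c.length := by
    intro u c hc
    set f : H ↪g G := SimpleGraph.Embedding.comap (Function.Embedding.subtype _) G with hf
    have hinj : Function.Injective (f.toHom : ↥(S : Set (Fin n)) → Fin n) := f.injective
    have hc' : (c.map f.toHom).IsCycle :=
      (SimpleGraph.Walk.map_isCycle_iff_of_injective hinj).mpr hc
    have := hcyc (f u) (c.map f.toHom) hc'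
    rwa [SimpleGraph.Walk.length_map] at this
  have hbig := growth (le_of_lt hb1) hδ hk1 hcycH ⟨s, by exact_mod_cast hs⟩
  -- card bound
  have hcard : Fintype.card ↥(S : Set (Fin n)) ≤ n := by
    have := Fintype.card_le_of_injective (fun w : ↥(S : Set (Fin n)) => (w : Fin n))
      Subtype.val_injective
    rwa [Fintype.card_fin] at this
  -- b ^ k ≥ n
  have hbk : (n:ℝ) ≤ b ^ k := by
    have h1 : Real.logb b n ≤ (k:ℝ) := Nat.le_ceil _
    have h2 : (n:ℝ) = b ^ Real.logb b n :=
      (Real.rpow_logb (by linarith) (ne_of_gt hb1) (by linarith)).symm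
    calc (n:ℝ) = b ^ Real.logb b n := h2
    _ ≤ b ^ (k:ℝ) := by
        apply Real.rpow_le_rpow_left_iff hb1 |>.mpr h1
    _ = b ^ k := Real.rpow_natCast b k
  have hcardR : (Fintype.card ↥(S : Set (Fin n)) : ℝ) ≤ (n:ℝ) := by exact_mod_cast hcard
  linarith
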